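/- If each of N quantum channels E_x : ℂ^d → ℂ^d is unitary (E_x(ρ) = U_x ρ U_x†), and the inputs x are uniform, then the entanglement-assisted distinguishability D_EAQC = max over bipartite states ρ_AB on ℂ^d ⊗ ℂ^{d'} and POVMs {T_x} of (1/N) Σ_x Tr[(U_x ⊗ I)ρ_AB(U_x† ⊗ I) T_x] satisfies D_EAQC ≤ d²/N. -/

import Mathlib

open Matrix BigOperators ComplexOrder Kronecker

private lemma kron_conjTranspose' {l m n p : Type*} (A : Matrix l m ℂ) (B : Matrix n p ℂ) :
    (A ⊗ₖ B)ᴴ = Aᴴ ⊗ₖ Bᴴ := by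
  ext ⟨i, j⟩ ⟨k, l⟩
  simp [conjTranspose_apply, kroneckerMap_apply, _root_.map_mul]

private lemma psd_eq_ct_mul_self' {n : Type*} [Fintype n] [DecidableEq n] {A : Matrix n n ℂ}
    (hA : A.PosSemidef) : ∃ B : Matrix n n ℂ, A = Bᴴ * B := by
  open scoped MatrixOrder Matrix.Norms.L2Operator in
  obtain ⟨B, hB⟩ := CStarAlgebra.nonneg_iff_eq_star_mul_self.mp hA.nonneg
  exact ⟨B, hB⟩

private lemma psd_trace_nonneg' {n : Type*} [Fintype n] {A : Matrix n n ℂ} (hA : A.PosSemidef) :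
    0 ≤ A.trace := by
  classical
  refine Finset.sum_nonneg fun i _ => ?_
  have := hA.dotProduct_mulVec_nonneg (Pi.single i 1)
  simpa [dotProduct, mulVec, Pi.single_apply] using this

private lemma psd_mul_trace_nonneg' {n : Type*} [Fintype n] [DecidableEq n]
    {A B : Matrix n n ℂ} (hA : A.PosSemidef) (hB : B.PosSemidef) :
    0 ≤ (A * B).trace := by
  obtain ⟨C, rfl⟩ := psd_eq_ct_mul_self' hB
  rw [← Matrix.mul_assoc, Matrix.trace_mul_cycle]
  exact psd_trace_nonneg' (hA.mul_mul_conjTranspose_same C)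

private lemma quad_step' {α β : Type*} [Fintype α] [Fintype β] (M : Matrix α β ℂ) (u : β → ℂ) :
    star u ⬝ᵥ ((Mᴴ * M) *ᵥ u) = ∑ a, ((Complex.normSq ((M *ᵥ u) a) : ℝ) : ℂ) := by
  rw [← Matrix.mulVec_mulVec, Matrix.dotProduct_mulVec, ← Matrix.star_mulVec]
  simp [dotProduct, Complex.normSq_eq_conj_mul_self]

private lemma kron_split' {d d' : ℕ} (ρB : Matrix (Fin d') (Fin d') ℂ) (v : Fin d × Fin d' → ℂ) :
    star v ⬝ᵥ (((1 : Matrix (Fin d) (Fin d) ℂ) ⊗ₖ ρB) *ᵥ v)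
      = ∑ i, star (fun j => v (i, j)) ⬝ᵥ (ρB *ᵥ (fun j => v (i, j))) := by
  simp only [dotProduct, Matrix.mulVec, Fintype.sum_prod_type, Matrix.kroneckerMap_apply,
    Matrix.one_apply, Pi.star_apply, ite_mul, one_mul, zero_mul]
  refine Finset.sum_congr rfl fun i _ => Finset.sum_congr rfl fun j _ => ?_
  congr 1
  rw [Finset.sum_comm]
  simp

/-- The key operator inequality: any PSD bipartite matrix is dominated by
`d` times the identity tensored with its partial trace over the first factor. -/
private lemma key' {d d' : ℕ} (ρ : Matrix (Fin d × Fin d') (Fin d × Fin d') ℂ)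
    (hρ : ρ.PosSemidef) :
    ((d : ℂ) • ((1 : Matrix (Fin d) (Fin d) ℂ) ⊗ₖ
        (Matrix.of fun j j' => ∑ i, ρ (i, j) (i, j'))) - ρ).PosSemidef := by
  obtain ⟨C, hC⟩ := psd_eq_ct_mul_self' hρ
  set ρB : Matrix (Fin d') (Fin d') ℂ := Matrix.of fun j j' => ∑ i, ρ (i, j) (i, j') with hρB
  set E : Fin d → Matrix (Fin d × Fin d') (Fin d') ℂ :=
    fun k => Matrix.of fun a j => C a (k, j) with hE
  have hρB' : ρB = ∑ k, (E k)ᴴ * E k := by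
    ext j j'
    simp only [hρB, hE, hC, Matrix.of_apply, Matrix.sum_apply, Matrix.mul_apply,
      Matrix.conjTranspose_apply]
  refine Matrix.posSemidef_iff_dotProduct_mulVec.mpr ⟨?_, ?_⟩
  · have hBH : ρB.IsHermitian := by
      ext j j'
      simp only [Matrix.conjTranspose_apply, hρB, Matrix.of_apply, star_sum]
      refine Finset.sum_congr rfl fun i _ => ?_
      exact hρ.1.apply (i, j) (i, j')
    have h1 : ((1 : Matrix (Fin d) (Fin d) ℂ) ⊗ₖ ρB).IsHermitian := by
      unfold Matrix.IsHermitian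
      rw [kron_conjTranspose', Matrix.conjTranspose_one, hBH.eq]
    unfold Matrix.IsHermitian
    rw [Matrix.conjTranspose_sub, Matrix.conjTranspose_smul, hρ.1.eq, h1.eq]
    congr 1
    simp
  intro v
  set c : (Fin d × Fin d') → Fin d → Fin d → ℂ :=
    fun a i k => ∑ j, C a (k, j) * v (i, j) with hc
  have eq0 : star v ⬝ᵥ (ρ *ᵥ v) = ∑ a, ((Complex.normSq (∑ k, c a k k) : ℝ) : ℂ) := by
    have hw : ∀ a, (∑ k, c a k k) = (C *ᵥ v) a := by
      intro a
      simp [hc, Matrix.mulVec, dotProduct, Fintype.sum_prod_type]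
    rw [hC, quad_step' C v]
    simp [hw]
  have eq1 : star v ⬝ᵥ (((1 : Matrix (Fin d) (Fin d) ℂ) ⊗ₖ ρB) *ᵥ v)
      = ∑ i, ∑ k, ∑ a, ((Complex.normSq (c a i k) : ℝ) : ℂ) := by
    rw [kron_split']
    refine Finset.sum_congr rfl fun i _ => ?_
    rw [hρB']
    have dps : ∀ (M : Fin d → Matrix (Fin d') (Fin d') ℂ) (u : Fin d' → ℂ),
        star u ⬝ᵥ ((∑ k, M k) *ᵥ u) = ∑ k, star u ⬝ᵥ (M k *ᵥ u) := by
      intro M u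
      simp only [Matrix.mulVec, dotProduct, Matrix.sum_apply, Finset.mul_sum, Finset.sum_mul,
        Pi.star_apply]
      trans ∑ x : Fin d', ∑ i : Fin d, ∑ x_1 : Fin d', star (u x) * (M i x x_1 * u x_1)
      · exact Finset.sum_congr rfl fun x _ => Finset.sum_comm
      · exact Finset.sum_comm
    rw [dps]
    refine Finset.sum_congr rfl fun k _ => ?_
    rw [quad_step']
    refine Finset.sum_congr rfl fun a _ => ?_
    have harg : ((E k) *ᵥ fun j => v (i, j)) a = c a i k := by
      simp [hE, Matrix.mulVec, dotProduct, hc]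
    rw [harg]
  have expand : star v ⬝ᵥ (((d : ℂ) • ((1 : Matrix (Fin d) (Fin d) ℂ) ⊗ₖ ρB) - ρ) *ᵥ v)
      = ((d * (∑ i, ∑ k, ∑ a, Complex.normSq (c a i k))
          - ∑ a, Complex.normSq (∑ k, c a k k) : ℝ) : ℂ) := by
    rw [Matrix.sub_mulVec, dotProduct_sub, Matrix.smul_mulVec, dotProduct_smul,
      eq0, eq1, smul_eq_mul]
    push_cast
    ring
  rw [expand, Complex.zero_le_real, sub_nonneg]
  have reorder : (∑ i, ∑ k, ∑ a : Fin d × Fin d', Complex.normSq (c a i k))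
      = ∑ a : Fin d × Fin d', ∑ i, ∑ k, Complex.normSq (c a i k) := by
    trans ∑ i, ∑ a : Fin d × Fin d', ∑ k, Complex.normSq (c a i k)
    · exact Finset.sum_congr rfl fun i _ => Finset.sum_comm
    · exact Finset.sum_comm
  rw [reorder, Finset.mul_sum]
  refine Finset.sum_le_sum fun a _ => ?_
  have h1 : Complex.normSq (∑ k, c a k k) ≤ (d : ℝ) * ∑ k, Complex.normSq (c a k k) := by
    have hnorm : ‖∑ k, c a k k‖ ≤ ∑ k, ‖c a k k‖ := by
      simpa using norm_sum_le Finset.univ (fun k => c a k k)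
    have h2 : Complex.normSq (∑ k, c a k k) ≤ (∑ k, ‖c a k k‖) ^ 2 := by
      rw [Complex.normSq_eq_norm_sq]
      exact pow_le_pow_left₀ (norm_nonneg _) hnorm 2
    have h3 : (∑ k, ‖c a k k‖) ^ 2
        ≤ (d : ℝ) * ∑ k, ‖c a k k‖ ^ 2 := by
      simpa using sq_sum_le_card_mul_sum_sq (s := Finset.univ)
        (f := fun k : Fin d => ‖c a k k‖)
    refine h2.trans (h3.trans_eq ?_)
    congr 1
    exact Finset.sum_congr rfl fun k _ => (Complex.normSq_eq_norm_sq _).symm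
  refine h1.trans (mul_le_mul_of_nonneg_left ?_ (by positivity))
  refine Finset.sum_le_sum fun k _ => ?_
  exact Finset.single_le_sum (fun _ _ => Complex.normSq_nonneg _) (Finset.mem_univ k)

/-- For `N` unitary channels on `ℂ^d` and uniform inputs, the entanglement-assisted
distinguishability is at most `d²/N`: for every shared bipartite state `ρ_AB` on
`ℂ^d ⊗ ℂ^{d'}` and every POVM `{T_x}`, the average guessing probability
`(1/N) Σ_x Tr[(U_x ⊗ I) ρ_AB (U_x† ⊗ I) T_x]` is at most `d²/N`. -/
theorem stmt14 (d d' N : ℕ) (hd : 0 < d) (hd' : 0 < d') (hN : 0 < N)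
    (U : Fin N → Matrix (Fin d) (Fin d) ℂ)
    (hU : ∀ x, U x ∈ Matrix.unitaryGroup (Fin d) ℂ)
    (ρ : Matrix (Fin d × Fin d') (Fin d × Fin d') ℂ)
    (hρpsd : ρ.PosSemidef) (hρtr : ρ.trace = 1)
    (T : Fin N → Matrix (Fin d × Fin d') (Fin d × Fin d') ℂ)
    (hTpsd : ∀ x, (T x).PosSemidef) (hTsum : ∑ x, T x = 1) :
    (1 / N : ℝ) * ∑ x,
      ((((U x ⊗ₖ (1 : Matrix (Fin d') (Fin d') ℂ)) * ρ *
          ((U x)ᴴ ⊗ₖ (1 : Matrix (Fin d') (Fin d') ℂ))) * T x).trace).re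
      ≤ (d : ℝ) ^ 2 / N := by
  set σ : Fin N → Matrix (Fin d × Fin d') (Fin d × Fin d') ℂ :=
    fun x => (U x ⊗ₖ (1 : Matrix (Fin d') (Fin d') ℂ)) * ρ *
      ((U x)ᴴ ⊗ₖ (1 : Matrix (Fin d') (Fin d') ℂ)) with hσ
  set ρB : Matrix (Fin d') (Fin d') ℂ := Matrix.of fun j j' => ∑ i, ρ (i, j) (i, j') with hρB
  have hσpsd : ∀ x, (σ x).PosSemidef := by
    intro x
    have hH : ((U x) ⊗ₖ (1 : Matrix (Fin d') (Fin d') ℂ))ᴴ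
        = (U x)ᴴ ⊗ₖ (1 : Matrix (Fin d') (Fin d') ℂ) := by
      rw [kron_conjTranspose', Matrix.conjTranspose_one]
    rw [hσ]
    simpa [hH] using hρpsd.mul_mul_conjTranspose_same (U x ⊗ₖ (1 : Matrix (Fin d') (Fin d') ℂ))
  have hUx : ∀ x, (U x)ᴴ * U x = 1 := by
    intro x
    have := (Unitary.mem_iff.mp (hU x)).1
    rwa [Matrix.star_eq_conjTranspose] at this
  have hptr : ∀ x j j', (∑ i, σ x (i, j) (i, j')) = ∑ i, ρ (i, j) (i, j') := by
    intro x j j'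
    have hdelta : ∀ k k', (∑ i, (starRingEnd ℂ) (U x i k') * U x i k)
        = ((1 : Matrix (Fin d) (Fin d) ℂ) k' k) := by
      intro k k'
      have := congrArg (fun M => M k' k) (hUx x)
      simpa [Matrix.mul_apply, Matrix.conjTranspose_apply] using this
    calc (∑ i, σ x (i, j) (i, j'))
        = ∑ i, ∑ k, ∑ k', U x i k * ρ (k, j) (k', j') * (starRingEnd ℂ) (U x i k') := by
          refine Finset.sum_congr rfl fun i _ => ?_
          simp only [hσ, Matrix.mul_apply, Fintype.sum_prod_type, Matrix.kroneckerMap_apply,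
            Matrix.one_apply, Matrix.conjTranspose_apply, Finset.sum_mul, mul_ite, mul_zero,
            ite_mul, zero_mul, mul_one, Finset.sum_ite_eq, Finset.sum_ite_eq',
            Finset.mem_univ, if_true]
          exact Finset.sum_comm
      _ = ∑ k, ∑ k', (∑ i, (starRingEnd ℂ) (U x i k') * U x i k) * ρ (k, j) (k', j') := by
          rw [Finset.sum_comm]
          refine Finset.sum_congr rfl fun k _ => ?_
          rw [Finset.sum_comm]
          refine Finset.sum_congr rfl fun k' _ => ?_
          rw [Finset.sum_mul]
          refine Finset.sum_congr rfl fun i _ => by ring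
      _ = ∑ i, ρ (i, j) (i, j') := by
          simp [Matrix.one_apply, hdelta, ite_mul]
  have hkey : ∀ x, ((d : ℂ) • ((1 : Matrix (Fin d) (Fin d) ℂ) ⊗ₖ ρB) - σ x).PosSemidef := by
    intro x
    have h := key' (σ x) (hσpsd x)
    have heq : (Matrix.of fun j j' => ∑ i, σ x (i, j) (i, j')) = ρB := by
      ext j j'
      simp only [Matrix.of_apply, hρB]
      exact hptr x j j'
    rwa [heq] at h
  have hterm : ∀ x, ((σ x * T x).trace).re
      ≤ (d : ℝ) * ((((1 : Matrix (Fin d) (Fin d) ℂ) ⊗ₖ ρB) * T x).trace).re := by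
    intro x
    have h0 : 0 ≤ (((d : ℂ) • ((1 : Matrix (Fin d) (Fin d) ℂ) ⊗ₖ ρB) - σ x) * T x).trace :=
      psd_mul_trace_nonneg' (hkey x) (hTpsd x)
    rw [Matrix.sub_mul, Matrix.trace_sub, Matrix.smul_mul, Matrix.trace_smul] at h0
    have h1 := (Complex.le_def.mp h0).1
    simp only [Complex.zero_re, Complex.sub_re, smul_eq_mul, Complex.mul_re,
      Complex.natCast_re, Complex.natCast_im, zero_mul, sub_zero] at h1
    linarith
  have hρBtr : ρB.trace = 1 := by
    rw [← hρtr]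
    simp only [Matrix.trace, Matrix.diag, hρB, Matrix.of_apply, Fintype.sum_prod_type]
    exact Finset.sum_comm
  have hsum : (∑ x, ((σ x * T x).trace).re) ≤ (d : ℝ) ^ 2 := by
    calc (∑ x, ((σ x * T x).trace).re)
        ≤ ∑ x, (d : ℝ) * ((((1 : Matrix (Fin d) (Fin d) ℂ) ⊗ₖ ρB) * T x).trace).re :=
          Finset.sum_le_sum fun x _ => hterm x
      _ = (d : ℝ) * (((((1 : Matrix (Fin d) (Fin d) ℂ) ⊗ₖ ρB)) * ∑ x, T x).trace).re := by
          rw [Matrix.mul_sum, Matrix.trace_sum, ← Finset.mul_sum]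
          congr 1
          rw [Complex.re_sum]
      _ = (d : ℝ) ^ 2 := by
          rw [hTsum, mul_one, Matrix.trace_kronecker, Matrix.trace_one, hρBtr, mul_one]
          simp [sq]
  have h1 : (1 / N : ℝ) * (∑ x, ((σ x * T x).trace).re) ≤ (1 / N : ℝ) * ((d : ℝ) ^ 2) :=
    mul_le_mul_of_nonneg_left hsum (by positivity)
  calc (1 / N : ℝ) * ∑ x, ((σ x * T x).trace).re ≤ (1 / N : ℝ) * ((d : ℝ) ^ 2) := h1
    _ = (d : ℝ) ^ 2 / N := by ring
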